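/- Let θ₁, θ₂, θ₁₂ > 0. On the open region D = {(r,s) : r, s > 0, exp(−θ₁₂ r) + exp(−θ₁₂ s) > 1}, the mixed second partial derivative of (r,s) ↦ ln(exp(−θ₁ r − θ₂ s)(exp(−θ₁₂ r) + exp(−θ₁₂ s) − 1)) with respect to r and s equals −θ₁₂² exp(−θ₁₂ r − θ₁₂ s) / (exp(−θ₁₂ r) + exp(−θ₁₂ s) − 1)², which is nonpositive. -/

import Mathlib

open Real

lemma inner_deriv (θ1 θ2 θ12 r s : ℝ)
    (h : 1 < exp (-θ12 * r) + exp (-θ12 * s)) :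
    deriv (fun r' : ℝ =>
        Real.log (exp (-θ1 * r' - θ2 * s) *
          (exp (-θ12 * r') + exp (-θ12 * s) - 1))) r =
      -θ1 + (-θ12 * exp (-θ12 * r)) / (exp (-θ12 * r) + exp (-θ12 * s) - 1) := by
  have hD : 0 < exp (-θ12 * r) + exp (-θ12 * s) - 1 := by linarith
  have hE : 0 < exp (-θ1 * r - θ2 * s) := exp_pos _
  have h1 : HasDerivAt (fun r' : ℝ => exp (-θ1 * r' - θ2 * s))
      (exp (-θ1 * r - θ2 * s) * (-θ1)) r := by
    have : HasDerivAt (fun r' : ℝ => -θ1 * r' - θ2 * s) (-θ1) r := by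
      simpa using ((hasDerivAt_id r).const_mul (-θ1)).sub_const (θ2 * s)
    exact this.exp
  have h2 : HasDerivAt (fun r' : ℝ => exp (-θ12 * r') + exp (-θ12 * s) - 1)
      (exp (-θ12 * r) * (-θ12)) r := by
    have : HasDerivAt (fun r' : ℝ => -θ12 * r') (-θ12) r := by
      simpa using (hasDerivAt_id r).const_mul (-θ12)
    simpa using (this.exp.add_const (exp (-θ12 * s))).sub_const 1
  have hF : HasDerivAt (fun r' : ℝ => exp (-θ1 * r' - θ2 * s) * (exp (-θ12 * r') + exp (-θ12 * s) - 1)) _ r := h1.mul h2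
  have hFne : exp (-θ1 * r - θ2 * s) * (exp (-θ12 * r) + exp (-θ12 * s) - 1) ≠ 0 :=
    ne_of_gt (mul_pos hE hD)
  have := (hF.log hFne).deriv
  rw [this]
  have key : ∀ E D er θ1 θ12 : ℝ, E ≠ 0 → D ≠ 0 →
      (E * -θ1 * D + E * (er * -θ12)) / (E * D) = -θ1 + -θ12 * er / D := by
    intro E D er a b hE hD
    field_simp
  exact key _ _ _ _ _ (ne_of_gt hE) (ne_of_gt hD)

theorem bnmo_log_mixed_partial
    (θ1 θ2 θ12 : ℝ) (hθ1 : 0 < θ1) (hθ2 : 0 < θ2) (hθ12 : 0 < θ12) :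
    ∀ r s : ℝ, 0 < r → 0 < s → 1 < exp (-θ12 * r) + exp (-θ12 * s) →
      deriv (fun s' : ℝ => deriv (fun r' : ℝ =>
          Real.log (exp (-θ1 * r' - θ2 * s') *
            (exp (-θ12 * r') + exp (-θ12 * s') - 1))) r) s =
        -θ12 ^ 2 * exp (-θ12 * r - θ12 * s) /
          (exp (-θ12 * r) + exp (-θ12 * s) - 1) ^ 2 ∧
      -θ12 ^ 2 * exp (-θ12 * r - θ12 * s) /
          (exp (-θ12 * r) + exp (-θ12 * s) - 1) ^ 2 ≤ 0 := by
  intro r s hr hs h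
  have hD : 0 < exp (-θ12 * r) + exp (-θ12 * s) - 1 := by linarith
  constructor
  · -- eventually equal to the explicit formula
    have hopen : IsOpen {s' : ℝ | 1 < exp (-θ12 * r) + exp (-θ12 * s')} := by
      have : Continuous fun s' : ℝ => exp (-θ12 * r) + exp (-θ12 * s') := by
        continuity
      exact isOpen_lt continuous_const this
    have hmem : {s' : ℝ | 1 < exp (-θ12 * r) + exp (-θ12 * s')} ∈ nhds s :=
      hopen.mem_nhds h
    have hev : (fun s' : ℝ => deriv (fun r' : ℝ =>
          Real.log (exp (-θ1 * r' - θ2 * s') *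
            (exp (-θ12 * r') + exp (-θ12 * s') - 1))) r) =ᶠ[nhds s]
        (fun s' : ℝ => -θ1 + (-θ12 * exp (-θ12 * r)) /
          (exp (-θ12 * r) + exp (-θ12 * s') - 1)) := by
      filter_upwards [hmem] with s' hs'
      exact inner_deriv θ1 θ2 θ12 r s' hs'
    rw [hev.deriv_eq]
    have hd : HasDerivAt (fun s' : ℝ => exp (-θ12 * r) + exp (-θ12 * s') - 1)
        (exp (-θ12 * s) * (-θ12)) s := by
      have : HasDerivAt (fun s' : ℝ => -θ12 * s') (-θ12) s := by
        simpa using (hasDerivAt_id s).const_mul (-θ12)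
      simpa using ((this.exp).const_add (exp (-θ12 * r))).sub_const 1
    have hdiv : HasDerivAt (fun s' : ℝ => (-θ12 * exp (-θ12 * r)) /
        (exp (-θ12 * r) + exp (-θ12 * s') - 1))
        ((0 * (exp (-θ12 * r) + exp (-θ12 * s) - 1) -
          (-θ12 * exp (-θ12 * r)) * (exp (-θ12 * s) * (-θ12))) /
          (exp (-θ12 * r) + exp (-θ12 * s) - 1) ^ 2) s :=
      (hasDerivAt_const s (-θ12 * exp (-θ12 * r))).div hd (ne_of_gt hD)
    have := (hdiv.const_add (-θ1)).deriv
    rw [this]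
    rw [show (-θ12 * r - θ12 * s) = (-θ12 * r) + (-θ12 * s) by ring, exp_add]
    ring
  · apply div_nonpos_of_nonpos_of_nonneg
    · nlinarith [exp_pos (-θ12 * r - θ12 * s), sq_nonneg θ12]
    · positivity
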